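/- The order on the class D of pairs (z, ζ) — where z is a finite set of ordinals, ζ is an ordinal, and either z = ∅ or ζ ≤ min(z) — defined by: (z, ζ) < (y, υ) iff, writing z = {z_0 > ... > z_{m-1}} with z_m = ζ and y = {y_0 > ... > y_{n-1}} with y_n = υ, either (m < n and z_i = y_i for all i ≤ m) or there is k ≤ min(m,n) with z↾k = y↾k and z_k < y_k — is a strict linear order and is wellfounded. -/

import Mathlib

/-- The `i`-th entry of the strictly decreasing enumeration `z_0 > ... > z_{m-1}` of the
finite set `z` of ordinals, extended by `z_m = ζ` (the default value for indices `≥ m`). -/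
noncomputable def ent (z : Finset Ordinal) (ζ : Ordinal) (i : ℕ) : Ordinal :=
  ((z.sort (· ≤ ·)).reverse).getD i ζ

/-- The order on pairs `(z, ζ)`: writing `z = {z_0 > ... > z_{m-1}}` with `z_m = ζ` and
`y = {y_0 > ... > y_{n-1}}` with `y_n = υ`, we have `(z, ζ) < (y, υ)` iff either
`m < n` and `z_i = y_i` for all `i ≤ m`, or there is `k ≤ min(m,n)` with `z↾k = y↾k`
and `z_k < y_k`. -/
noncomputable def ltD (p q : Finset Ordinal × Ordinal) : Prop :=
  (p.1.card < q.1.card ∧ ∀ i ≤ p.1.card, ent p.1 p.2 i = ent q.1 q.2 i) ∨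
  ∃ k : ℕ, k ≤ p.1.card ∧ k ≤ q.1.card ∧ (∀ i < k, ent p.1 p.2 i = ent q.1 q.2 i) ∧
    ent p.1 p.2 k < ent q.1 q.2 k

/-- The class `D` of pairs `(z, ζ)` with `z` a finite set of ordinals, `ζ` an ordinal,
and either `z = ∅` or `ζ ≤ min z`. -/
def DClass : Set (Finset Ordinal × Ordinal) :=
  {p | p.1 = ∅ ∨ ∀ a ∈ p.1, p.2 ≤ a}

open Ordinal

universe u

/-- The Cantor-normal-form-like sum `ω ^ a₀ + ω ^ a₁ + ⋯` of a list of ordinals. -/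
noncomputable def gsum : List Ordinal.{u} → Ordinal
  | [] => 0
  | a :: l => ω ^ a + gsum l

lemma gsum_pos (a : Ordinal.{u}) (l : List Ordinal.{u}) : 0 < gsum (a :: l) :=
  lt_of_lt_of_le (opow_pos a omega0_pos) le_self_add

lemma gsum_lt_opow {a : Ordinal.{u}} : ∀ {l : List Ordinal.{u}}, (∀ x ∈ l, x ≤ a) →
    gsum l < ω ^ Order.succ a
  | [], _ => by rw [gsum]; exact opow_pos _ omega0_pos
  | b :: l, h => by
    rw [gsum]
    exact principal_add_omega0_opow _
      ((opow_lt_opow_iff_right one_lt_omega0).2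
        (Order.lt_succ_iff.2 (h b List.mem_cons_self)))
      (gsum_lt_opow fun x hx => h x (List.mem_cons_of_mem _ hx))

lemma gsum_lt_of_lex {l₁ l₂ : List Ordinal.{u}} (h : List.Lex (· < ·) l₁ l₂)
    (hs : l₁.Pairwise (· ≥ ·)) : gsum l₁ < gsum l₂ := by
  induction h with
  | @nil b l => exact gsum_pos _ _
  | @cons a t₁ t₂ h ih =>
    rw [gsum, gsum]
    exact (add_lt_add_iff_left _).2 (ih hs.of_cons)
  | @rel a t₁ b t₂ hab =>
    have h1 : gsum (a :: t₁) < ω ^ Order.succ a := by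
      rw [gsum]
      exact principal_add_omega0_opow _
        ((opow_lt_opow_iff_right one_lt_omega0).2 (Order.lt_succ _))
        (gsum_lt_opow fun x hx => (List.pairwise_cons.1 hs).1 x hx)
    calc gsum (a :: t₁) < ω ^ Order.succ a := h1
      _ ≤ ω ^ b := opow_le_opow_right omega0_pos (Order.succ_le_iff.2 hab)
      _ ≤ gsum (b :: t₂) := by rw [gsum]; exact le_self_add

/-- The word associated to a pair: the decreasing enumeration of `z` followed by `ζ`. -/
noncomputable def wlist (p : Finset Ordinal.{u} × Ordinal.{u}) : List Ordinal.{u} :=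
  (p.1.sort (· ≤ ·)).reverse ++ [p.2]

lemma wlist_length (p : Finset Ordinal.{u} × Ordinal.{u}) : (wlist p).length = p.1.card + 1 := by
  simp [wlist]

lemma ent_of_lt {z : Finset Ordinal.{u}} {ζ : Ordinal.{u}} {i : ℕ} (hi : i < z.card) :
    ent z ζ i = ((z.sort (· ≤ ·)).reverse)[i]'(by simpa using hi) := by
  rw [ent, List.getD_eq_getElem?_getD, List.getElem?_eq_getElem (by simpa using hi)]
  rfl

lemma ent_of_eq {z : Finset Ordinal.{u}} {ζ : Ordinal.{u}} : ent z ζ z.card = ζ := by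
  rw [ent, List.getD_eq_getElem?_getD, List.getElem?_eq_none (by simp)]
  rfl

lemma ent_eq_wlist {p : Finset Ordinal.{u} × Ordinal.{u}} {i : ℕ} (hi : i ≤ p.1.card) :
    ent p.1 p.2 i = (wlist p).getD i 0 := by
  rcases lt_or_eq_of_le hi with h | h
  · rw [ent_of_lt h, wlist, List.getD_append _ _ _ _ (by simpa using h),
      List.getD_eq_getElem?_getD, List.getElem?_eq_getElem (by simpa using h)]
    rfl
  · subst h
    rw [ent_of_eq, wlist, List.getD_eq_getElem?_getD,
      List.getElem?_append_right (by simp)]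
    simp

lemma wlist_sorted {p : Finset Ordinal.{u} × Ordinal.{u}} (hp : p ∈ DClass) :
    (wlist p).Pairwise (· ≥ ·) := by
  rw [wlist, List.pairwise_append]
  refine ⟨List.pairwise_reverse.2 ?_, List.pairwise_singleton _ _, ?_⟩
  · exact (p.1.pairwise_sort (· ≤ ·)).imp (by intro a b h; exact h)
  · intro a ha b hb
    rw [List.mem_singleton] at hb
    subst hb
    rw [List.mem_reverse, Finset.mem_sort] at ha
    rcases hp with h | h
    · simp [h] at ha
    · exact h a ha

lemma lex_prefix : ∀ (l₁ l₂ : List Ordinal.{u}), l₁.length < l₂.length →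
    (∀ i < l₁.length, l₁.getD i 0 = l₂.getD i 0) → List.Lex (· < ·) l₁ l₂
  | [], [], h, _ => absurd h (lt_irrefl _)
  | [], _ :: _, _, _ => List.Lex.nil
  | _ :: _, [], h, _ => by simp at h
  | a :: t₁, b :: t₂, h, he => by
    have h0 := he 0 (Nat.succ_pos _)
    rw [List.getD_cons_zero, List.getD_cons_zero] at h0
    subst h0
    exact List.Lex.cons (lex_prefix t₁ t₂ (by simpa using h)
      fun i hi => by
        have := he (i + 1) (by simpa using hi)
        rwa [List.getD_cons_succ, List.getD_cons_succ] at this)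

lemma lex_of_lt : ∀ (k : ℕ) (l₁ l₂ : List Ordinal.{u}), k < l₁.length → k < l₂.length →
    (∀ i < k, l₁.getD i 0 = l₂.getD i 0) → l₁.getD k 0 < l₂.getD k 0 →
    List.Lex (· < ·) l₁ l₂
  | _, [], _, h₁, _, _, _ => by simp at h₁
  | _, _ :: _, [], _, h₂, _, _ => by simp at h₂
  | 0, a :: t₁, b :: t₂, _, _, _, hk => by
    rw [List.getD_cons_zero, List.getD_cons_zero] at hk
    exact List.Lex.rel hk
  | k + 1, a :: t₁, b :: t₂, h₁, h₂, he, hk => by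
    have h0 := he 0 (Nat.succ_pos _)
    rw [List.getD_cons_zero, List.getD_cons_zero] at h0
    subst h0
    rw [List.getD_cons_succ, List.getD_cons_succ] at hk
    exact List.Lex.cons (lex_of_lt k t₁ t₂ (by simpa using h₁) (by simpa using h₂)
      (fun i hi => by
        have := he (i + 1) (by simpa using hi)
        rwa [List.getD_cons_succ, List.getD_cons_succ] at this) hk)

lemma ltD_mono {p q : Finset Ordinal.{u} × Ordinal.{u}} (hp : p ∈ DClass) (h : ltD p q) :
    gsum (wlist p) < gsum (wlist q) := by
  refine gsum_lt_of_lex ?_ (wlist_sorted hp)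
  rcases h with ⟨hc, he⟩ | ⟨k, hk₁, hk₂, he, hk⟩
  · refine lex_prefix _ _ (by rw [wlist_length, wlist_length]; omega) fun i hi => ?_
    rw [wlist_length] at hi
    have hip : i ≤ p.1.card := by omega
    rw [← ent_eq_wlist hip, ← ent_eq_wlist (show i ≤ q.1.card by omega)]
    exact he i hip
  · refine lex_of_lt k _ _ (by rw [wlist_length]; omega) (by rw [wlist_length]; omega)
      (fun i hi => ?_) ?_
    · rw [← ent_eq_wlist (show i ≤ p.1.card by omega),
        ← ent_eq_wlist (show i ≤ q.1.card by omega)]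
      exact he i hi
    · rw [← ent_eq_wlist hk₁, ← ent_eq_wlist hk₂]
      exact hk

lemma ltD_total {p q : Finset Ordinal.{u} × Ordinal.{u}} (hpq : p ≠ q) : ltD p q ∨ ltD q p := by
  classical
  by_cases hex : ∃ k, k ≤ p.1.card ∧ k ≤ q.1.card ∧ ent p.1 p.2 k ≠ ent q.1 q.2 k
  · set k := Nat.find hex with hkdef
    obtain ⟨hk₁, hk₂, hk₃⟩ := Nat.find_spec hex
    have he : ∀ i < k, ent p.1 p.2 i = ent q.1 q.2 i := by
      intro i hi
      by_contra hne
      exact Nat.find_min hex hi ⟨by omega, by omega, hne⟩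
    rcases lt_or_gt_of_ne hk₃ with h | h
    · exact Or.inl (Or.inr ⟨k, hk₁, hk₂, he, h⟩)
    · exact Or.inr (Or.inr ⟨k, hk₂, hk₁, fun i hi => (he i hi).symm, h⟩)
  · push_neg at hex
    rcases lt_trichotomy p.1.card q.1.card with h | h | h
    · exact Or.inl (Or.inl ⟨h, fun i hi => hex i hi (by omega)⟩)
    · exfalso
      have hz : p.1 = q.1 := by
        have hlist : (p.1.sort (· ≤ ·)).reverse = (q.1.sort (· ≤ ·)).reverse := by
          apply List.ext_getElem (by simpa using h)
          intro i h1 h2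
          have hi : i < p.1.card := by simpa using h1
          have := hex i (le_of_lt hi) (by omega)
          rwa [ent_of_lt hi, ent_of_lt (show i < q.1.card by omega)] at this
        have hsort : p.1.sort (· ≤ ·) = q.1.sort (· ≤ ·) := by
          have := congrArg List.reverse hlist
          simpa using this
        exact Finset.ext fun a => by
          rw [← Finset.mem_sort (α := Ordinal) (· ≤ ·), hsort, Finset.mem_sort]
      have hζ : p.2 = q.2 := by
        have := hex p.1.card le_rfl (by omega)
        rwa [ent_of_eq, h, ent_of_eq] at this
      exact hpq (Prod.ext hz hζ)
    · exact Or.inr (Or.inl ⟨h, fun i hi => (hex i (by omega) hi).symm⟩)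

/-- On `D`, the order `ltD` is a strict linear order (irreflexive, transitive, total on
distinct pairs) and is wellfounded (every nonempty subset of `D` has a minimal element). -/
theorem ltD_strict_linear_order_wellFounded :
    (∀ p ∈ DClass, ¬ ltD p p) ∧
    (∀ p ∈ DClass, ∀ q ∈ DClass, ∀ r ∈ DClass, ltD p q → ltD q r → ltD p r) ∧
    (∀ p ∈ DClass, ∀ q ∈ DClass, p ≠ q → ltD p q ∨ ltD q p) ∧
    (∀ S : Set (Finset Ordinal × Ordinal), S ⊆ DClass → S.Nonempty →
      ∃ p ∈ S, ∀ q ∈ S, ¬ ltD q p) := by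
  refine ⟨?_, ?_, ?_, ?_⟩
  · intro p hp h
    exact absurd (ltD_mono hp h) (lt_irrefl _)
  · intro p hp q hq r hr h1 h2
    have hf : gsum (wlist p) < gsum (wlist r) := (ltD_mono hp h1).trans (ltD_mono hq h2)
    have hpr : p ≠ r := by
      rintro rfl
      exact absurd hf (lt_irrefl _)
    rcases ltD_total hpr with h | h
    · exact h
    · exact absurd (ltD_mono hr h) (not_lt.mpr hf.le)
  · intro p _ q _ h
    exact ltD_total h
  · rintro S hS ⟨p0, hp0⟩
    set T : Set Ordinal := (fun p => gsum (wlist p)) '' S with hT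
    have hTne : T.Nonempty := ⟨_, ⟨p0, hp0, rfl⟩⟩
    obtain ⟨p, hpS, hpm⟩ := Ordinal.lt_wf.min_mem T hTne
    refine ⟨p, hpS, fun q hq hlt => ?_⟩
    have hlt' := ltD_mono (hS hq) hlt
    have hpm' : gsum (wlist p) = Ordinal.lt_wf.min T hTne := hpm
    rw [hpm'] at hlt'
    exact Ordinal.lt_wf.not_lt_min T ⟨q, hq, rfl⟩ hlt'
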